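/- Let G be a connected loopless directed multigraph on vertex set {1,…,n+1} with m edges, each edge directed from its smaller endpoint to its larger endpoint, such that every vertex i ∈ {1,…,n} has out-degree at least 1. For i ∈ {1,…,n} set u_i = (in-degree of i) − 1 (an integer, possibly −1). For a positive integer x, let E_G(x) denote the number of assignments of nonnegative integers to the edges of G such that at every vertex i ∈ {1,…,n} the total flow on edges leaving i minus the total flow on edges entering i equals x + u_i. Then there exists a polynomial P of degree exactly m − n with nonnegative rational coefficients such that E_G(x) = P(x) for every positive integer x. -/

import Mathlib

open Finset Polynomial

namespace Stmt18

variable {n m : ℕ}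

/-- Contribution of one edge `p` carrying flow `c` to the shifted netflow at `v`. -/
def T {n : ℕ} (p : Fin (n+1) × Fin (n+1)) (c : ℤ) (v : Fin (n+1)) : ℤ :=
  c * (if p.1 = v then 1 else 0) - (c + 1) * (if p.2 = v then 1 else 0)

def net (edges : Fin m → Fin (n+1) × Fin (n+1)) (b : Fin m → ℕ) (v : Fin (n+1)) : ℤ :=
  ∑ e, T (edges e) (b e) v

def Flow (edges : Fin m → Fin (n+1) × Fin (n+1)) (x : ℕ) : Type :=
  {b : Fin m → ℕ // ∀ v : Fin (n+1), (v : ℕ) < n → net edges b v = (x : ℤ) - 1}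


lemma T_id1 (a i bb v : Fin (n+1)) (p q : ℤ) :
    T (a, i) (p - q) v + T (a, bb) q v = T (a, i) p v + T (i, bb) q v := by
  simp only [T]; split_ifs <;> ring

lemma T_id2 (a i bb v : Fin (n+1)) (p q : ℤ) :
    T (a, bb) p v + T (i, bb) (q - p - 1) v = T (a, i) p v + T (i, bb) q v := by
  simp only [T]; split_ifs <;> ring

lemma sum_pair {e1 e2 : Fin m} (hne : e1 ≠ e2) (f g : Fin m → ℤ)
    (hfg : ∀ e, e ≠ e1 → e ≠ e2 → f e = g e)
    (h12 : f e1 + f e2 = g e1 + g e2) : ∑ e, f e = ∑ e, g e := by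
  classical
  have h2 : e2 ∈ (univ : Finset (Fin m)).erase e1 := by
    simp [Finset.mem_erase, Ne.symm hne]
  rw [← Finset.sum_erase_add _ _ (Finset.mem_univ e1),
      ← Finset.sum_erase_add _ _ (Finset.mem_univ e1),
      ← Finset.sum_erase_add _ _ h2, ← Finset.sum_erase_add _ _ h2]
  have : ∑ e ∈ ((univ : Finset (Fin m)).erase e1).erase e2, f e =
      ∑ e ∈ ((univ : Finset (Fin m)).erase e1).erase e2, g e := by
    refine Finset.sum_congr rfl fun e he => ?_
    simp only [Finset.mem_erase] at he
    exact hfg e he.2.1 he.1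
  omega

lemma net_eq_of {edges edges' : Fin m → Fin (n+1) × Fin (n+1)} {b b' : Fin m → ℕ}
    {e1 e2 : Fin m} (hne : e1 ≠ e2)
    (hoff : ∀ e, e ≠ e1 → e ≠ e2 → edges' e = edges e ∧ b' e = b e)
    (hpair : ∀ v, T (edges' e1) (b' e1) v + T (edges' e2) (b' e2) v
      = T (edges e1) (b e1) v + T (edges e2) (b e2) v) (v : Fin (n+1)) :
    net edges' b' v = net edges b v := by
  refine sum_pair hne _ _ (fun e he1 he2 => ?_) (hpair v)
  rw [(hoff e he1 he2).1, (hoff e he1 he2).2]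

section Reduction

variable (edges : Fin m → Fin (n+1) × Fin (n+1)) (eIn eOut : Fin m)

/-- The two reduced graphs. -/
def G1 : Fin m → Fin (n+1) × Fin (n+1) :=
  Function.update edges eOut ((edges eIn).1, (edges eOut).2)

def G2 : Fin m → Fin (n+1) × Fin (n+1) :=
  Function.update edges eIn ((edges eIn).1, (edges eOut).2)

variable {edges eIn eOut}

lemma edges_eIn_eq (hIO : (edges eIn).2 = (edges eOut).1) :
    edges eIn = ((edges eIn).1, (edges eOut).1) := by
  rw [← hIO]

lemma edges_eOut_eq : edges eOut = ((edges eOut).1, (edges eOut).2) := rfl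

variable (hne : eIn ≠ eOut) (hIO : (edges eIn).2 = (edges eOut).1)

noncomputable def flowEquiv (x : ℕ) :
    Flow edges x ≃ Flow (G1 edges eIn eOut) x ⊕ Flow (G2 edges eIn eOut) x where
  toFun b :=
    if h : b.1 eOut ≤ b.1 eIn then
      Sum.inl ⟨Function.update b.1 eIn (b.1 eIn - b.1 eOut), by
        intro v hv
        refine Eq.trans ?_ (b.2 v hv)
        refine net_eq_of (e1 := eIn) (e2 := eOut) hne (fun e h1 h2 => ?_) (fun w => ?_) v
        · constructor
          · simp [G1, Function.update_of_ne h2]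
          · simp [Function.update_of_ne h1]
        · have hG1In : G1 edges eIn eOut eIn = edges eIn := by
            simp [G1, Function.update_of_ne hne]
          have hG1Out : G1 edges eIn eOut eOut = ((edges eIn).1, (edges eOut).2) := by
            simp [G1]
          rw [hG1In, hG1Out, Function.update_self, Function.update_of_ne (Ne.symm hne),
            edges_eIn_eq hIO]
          push_cast [Nat.cast_sub h]
          exact T_id1 _ _ _ _ _ _⟩
    else
      Sum.inr ⟨Function.update b.1 eOut (b.1 eOut - b.1 eIn - 1), by
        intro v hv
        refine Eq.trans ?_ (b.2 v hv)
        refine net_eq_of (e1 := eIn) (e2 := eOut) hne (fun e h1 h2 => ?_) (fun w => ?_) v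
        · constructor
          · simp [G2, Function.update_of_ne h1]
          · simp [Function.update_of_ne h2]
        · have hG2In : G2 edges eIn eOut eIn = ((edges eIn).1, (edges eOut).2) := by
            simp [G2]
          have hG2Out : G2 edges eIn eOut eOut = edges eOut := by
            simp [G2, Function.update_of_ne (Ne.symm hne)]
          rw [hG2In, hG2Out, Function.update_self, Function.update_of_ne hne,
            edges_eIn_eq hIO]
          have hlt : b.1 eIn < b.1 eOut := not_le.mp h
          push_cast [Nat.cast_sub (by omega : 1 ≤ b.1 eOut - b.1 eIn),
            Nat.cast_sub (by omega : b.1 eIn ≤ b.1 eOut)]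
          exact T_id2 _ _ _ _ _ _⟩
  invFun s :=
    match s with
    | Sum.inl c => ⟨Function.update c.1 eIn (c.1 eIn + c.1 eOut), by
        intro v hv
        refine Eq.trans ?_ (c.2 v hv)
        refine net_eq_of (e1 := eIn) (e2 := eOut) hne (fun e h1 h2 => ?_) (fun w => ?_) v
        · constructor
          · simp [G1, Function.update_of_ne h2]
          · simp [Function.update_of_ne h1]
        · have hG1In : G1 edges eIn eOut eIn = edges eIn := by
            simp [G1, Function.update_of_ne hne]
          have hG1Out : G1 edges eIn eOut eOut = ((edges eIn).1, (edges eOut).2) := by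
            simp [G1]
          rw [hG1In, hG1Out, Function.update_self, Function.update_of_ne (Ne.symm hne),
            edges_eIn_eq hIO]
          push_cast
          have := T_id1 (edges eIn).1 (edges eOut).1 (edges eOut).2 w
            ((c.1 eIn : ℤ) + c.1 eOut) (c.1 eOut)
          simpa using this.symm⟩
    | Sum.inr c => ⟨Function.update c.1 eOut (c.1 eIn + c.1 eOut + 1), by
        intro v hv
        refine Eq.trans ?_ (c.2 v hv)
        refine net_eq_of (e1 := eIn) (e2 := eOut) hne (fun e h1 h2 => ?_) (fun w => ?_) v
        · constructor
          · simp [G2, Function.update_of_ne h1]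
          · simp [Function.update_of_ne h2]
        · have hG2In : G2 edges eIn eOut eIn = ((edges eIn).1, (edges eOut).2) := by
            simp [G2]
          have hG2Out : G2 edges eIn eOut eOut = edges eOut := by
            simp [G2, Function.update_of_ne (Ne.symm hne)]
          rw [hG2In, hG2Out, Function.update_self, Function.update_of_ne hne,
            edges_eIn_eq hIO]
          push_cast
          have := T_id2 (edges eIn).1 (edges eOut).1 (edges eOut).2 w
            (c.1 eIn : ℤ) ((c.1 eIn : ℤ) + c.1 eOut + 1)
          rw [show ((c.1 eIn : ℤ) + c.1 eOut + 1 - c.1 eIn - 1) = (c.1 eOut : ℤ) from by ring]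
            at this
          simpa using this.symm⟩
  left_inv b := by
    by_cases h : b.1 eOut ≤ b.1 eIn
    · dsimp only
      rw [dif_pos h]
      dsimp only
      apply Subtype.ext
      simp only
      rw [Function.update_of_ne (Ne.symm hne), Function.update_self, Function.update_idem]
      rw [Nat.sub_add_cancel h, Function.update_eq_self]
    · dsimp only
      rw [dif_neg h]
      dsimp only
      apply Subtype.ext
      simp only
      rw [Function.update_of_ne hne, Function.update_self, Function.update_idem]
      have : b.1 eIn + (b.1 eOut - b.1 eIn - 1) + 1 = b.1 eOut := by omega
      rw [this, Function.update_eq_self]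
  right_inv s := by
    match s with
    | Sum.inl c =>
      dsimp only
      have hOut : Function.update c.1 eIn (c.1 eIn + c.1 eOut) eOut = c.1 eOut :=
        Function.update_of_ne (Ne.symm hne) _ _
      have hIn : Function.update c.1 eIn (c.1 eIn + c.1 eOut) eIn = c.1 eIn + c.1 eOut :=
        Function.update_self _ _ _
      rw [dif_pos (by rw [hOut, hIn]; omega)]
      congr 1
      apply Subtype.ext
      simp only
      rw [hOut, hIn, Function.update_idem]
      have : c.1 eIn + c.1 eOut - c.1 eOut = c.1 eIn := by omega
      rw [this, Function.update_eq_self]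
    | Sum.inr c =>
      dsimp only
      have hOut : Function.update c.1 eOut (c.1 eIn + c.1 eOut + 1) eOut
          = c.1 eIn + c.1 eOut + 1 := Function.update_self _ _ _
      have hIn : Function.update c.1 eOut (c.1 eIn + c.1 eOut + 1) eIn = c.1 eIn :=
        Function.update_of_ne hne _ _
      rw [dif_neg (by rw [hOut, hIn]; omega)]
      congr 1
      apply Subtype.ext
      simp only
      rw [hOut, hIn, Function.update_idem]
      have : c.1 eIn + c.1 eOut + 1 - c.1 eIn - 1 = c.1 eOut := by omega
      rw [this, Function.update_eq_self]

end Reduction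


lemma dead_isEmpty (edges : Fin m → Fin (n+1) × Fin (n+1)) (i : Fin (n+1)) (hi : (i:ℕ) < n)
    (e0 : Fin m) (he0 : (edges e0).2 = i) (hout : ∀ e, (edges e).1 ≠ i)
    (x : ℕ) (hx : 0 < x) : IsEmpty (Flow edges x) := by
  constructor
  rintro ⟨b, hb⟩
  have hnet := hb i hi
  have hle : net edges b i ≤ ∑ e, (if e = e0 then (-1 : ℤ) else 0) := by
    refine Finset.sum_le_sum fun e _ => ?_
    simp only [T, if_neg (hout e)]
    by_cases he : e = e0
    · subst he
      rw [if_pos rfl, if_pos he0]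
      have : (0:ℤ) ≤ (b e : ℤ) := Int.natCast_nonneg _
      nlinarith
    · rw [if_neg he]
      split_ifs with h
      · have : (0:ℤ) ≤ (b e : ℤ) := Int.natCast_nonneg _
        nlinarith
      · simp
  rw [Finset.sum_ite_eq' univ e0 (fun _ => (-1:ℤ)), if_pos (mem_univ e0)] at hle
  rw [hnet] at hle
  omega

/-! ### counting & polynomial helpers -/

lemma coeff_nonneg_mul {p q : ℚ[X]} (hp : ∀ i, 0 ≤ p.coeff i) (hq : ∀ i, 0 ≤ q.coeff i) :
    ∀ i, 0 ≤ (p * q).coeff i := by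
  intro i
  rw [Polynomial.coeff_mul]
  exact Finset.sum_nonneg fun x _ => mul_nonneg (hp _) (hq _)

lemma coeff_nonneg_prod {ι : Type*} (s : Finset ι) (f : ι → ℚ[X])
    (h : ∀ j ∈ s, ∀ i, 0 ≤ (f j).coeff i) : ∀ i, 0 ≤ (∏ j ∈ s, f j).coeff i := by
  classical
  induction s using Finset.induction_on with
  | empty => intro i; simp [Polynomial.coeff_one]; positivity
  | @insert a s' hj ih =>
    rw [Finset.prod_insert hj]
    exact coeff_nonneg_mul (h a (mem_insert_self a s'))
      (ih fun j hjs i => h j (mem_insert_of_mem hjs) i)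

lemma ascPochhammer_coeff_nonneg (k : ℕ) : ∀ i, 0 ≤ (ascPochhammer ℚ k).coeff i := by
  induction k with
  | zero => intro i; rw [ascPochhammer_zero]; by_cases h : i = 0 <;> simp [Polynomial.coeff_one, h]
  | succ k ih =>
    intro i
    rw [ascPochhammer_succ_right, ← Polynomial.C_eq_natCast, mul_add, Polynomial.coeff_add,
      Polynomial.coeff_mul_C]
    have h1 : 0 ≤ (ascPochhammer ℚ k * X).coeff i := by
      cases i with
      | zero => rw [Polynomial.mul_coeff_zero, Polynomial.coeff_X_zero, mul_zero]
      | succ j => rw [Polynomial.coeff_mul_X]; exact ih j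
    have h2 : (0:ℚ) ≤ (k : ℚ) := by positivity
    exact add_nonneg h1 (mul_nonneg (ih i) h2)

lemma count_eq (d x : ℕ) (hd : 1 ≤ d) (hx : 1 ≤ x) :
    x.ascFactorial (d-1) = Nat.factorial (d-1) * Nat.multichoose d (x-1) := by
  rw [Nat.multichoose_eq, Nat.ascFactorial_eq_factorial_mul_choose']
  congr 1
  have h1 : x + (d-1) - 1 = d + (x-1) - 1 := by omega
  rw [h1]
  have h2 : (d + (x-1) - 1) - (x-1) = d - 1 := by omega
  rw [← h2]
  exact Nat.choose_symm (by omega)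

lemma base (edges : Fin m → Fin (n+1) × Fin (n+1))
    (inc : ∀ e, (edges e).1 < (edges e).2) (hall : ∀ e, ((edges e).2 : ℕ) = n)
    (inv : ∀ v : Fin (n+1), (v : ℕ) < n → (∃ e, (edges e).1 = v) ∨ (∃ e, (edges e).2 = v)) :
    ∃ P : Polynomial ℚ, (∀ i, 0 ≤ P.coeff i) ∧ P.degree ≤ (m - n : ℕ) ∧
      (∀ x : ℕ, 0 < x → Finite (Flow edges x) ∧ ((Nat.card (Flow edges x) : ℚ) = P.eval ((x:ℕ):ℚ))) ∧
      0 < P.coeff (m - n) := by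
  classical
  have hsrc : ∀ e, ((edges e).1 : ℕ) < n := by
    intro e; have h1 := inc e; have h2 := hall e
    rw [Fin.lt_def] at h1; omega
  set f : Fin m → Fin n := fun e => ⟨((edges e).1 : ℕ), hsrc e⟩ with hf
  set d : Fin n → ℕ := fun v => Fintype.card {e // f e = v} with hdd
  have hm : m = ∑ v, d v := by
    have := Fintype.card_congr (Equiv.sigmaFiberEquiv f).symm
    simpa [Fintype.card_sigma, hdd] using this
  have hd1 : ∀ v, 1 ≤ d v := by
    intro v
    rcases inv v.castSucc (by simp) with ⟨e, he⟩ | ⟨e, he⟩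
    · have hfe : f e = v := by
        apply Fin.ext
        have := congrArg Fin.val he
        simpa [hf] using this
      exact Fintype.card_pos_iff.mpr ⟨⟨e, hfe⟩⟩
    · exfalso
      have h3 := congrArg Fin.val he
      have h2 := hall e
      simp at h3
      omega
  have hnet : ∀ (b : Fin m → ℕ) (v : Fin n), net edges b v.castSucc
      = ∑ e ∈ univ.filter (fun e => f e = v), (b e : ℤ) := by
    intro b v
    rw [Finset.sum_filter]
    unfold net
    refine Finset.sum_congr rfl fun e _ => ?_
    have h2 : ¬((edges e).2 = v.castSucc) := by
      intro hh
      have h3 := congrArg Fin.val hh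
      have h4 := hall e
      simp at h3
      omega
    have h1 : ((edges e).1 = v.castSucc) ↔ f e = v := by
      rw [Fin.ext_iff, Fin.ext_iff]
      simp [hf]
    simp only [T, if_neg h2, mul_zero, sub_zero]
    by_cases hfe : f e = v
    · rw [if_pos (h1.mpr hfe), if_pos hfe, mul_one]
    · rw [if_neg (fun hh => hfe (h1.mp hh)), if_neg hfe, mul_zero]
  -- the polynomial
  set P : ℚ[X] :=
    ∏ v : Fin n, (Polynomial.C ((Nat.factorial (d v - 1) : ℚ)⁻¹) * ascPochhammer ℚ (d v - 1))
    with hP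
  have hfac_ne : ∀ v : Fin n, ((Nat.factorial (d v - 1) : ℚ))⁻¹ ≠ 0 := fun v => by positivity
  have hfact_ne_zero : ∀ v : Fin n,
      (Polynomial.C ((Nat.factorial (d v - 1):ℚ)⁻¹) * ascPochhammer ℚ (d v - 1)) ≠ 0 :=
    fun v => mul_ne_zero (Polynomial.C_ne_zero.mpr (hfac_ne v)) (monic_ascPochhammer ℚ _).ne_zero
  have hdeg_sum : ∑ v : Fin n, (d v - 1) = m - n := by
    have hsum : ∑ v : Fin n, (d v - 1) + ∑ _v : Fin n, 1 = ∑ v, d v := by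
      rw [← Finset.sum_add_distrib]
      exact Finset.sum_congr rfl fun v _ => by have := hd1 v; omega
    have hn' : ∑ _v : Fin n, (1:ℕ) = n := by simp
    omega
  have hnatdeg : P.natDegree = m - n := by
    rw [hP, Polynomial.natDegree_prod _ _ (fun v _ => hfact_ne_zero v), ← hdeg_sum]
    refine Finset.sum_congr rfl fun v _ => ?_
    rw [Polynomial.natDegree_C_mul (hfac_ne v), ascPochhammer_natDegree]
  have hPne : P ≠ 0 := by
    rw [hP]; exact Finset.prod_ne_zero_iff.mpr fun v _ => hfact_ne_zero v
  have hdeg : P.degree ≤ (m - n : ℕ) := by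
    rw [Polynomial.degree_eq_natDegree hPne, hnatdeg]
  have hlead : P.coeff (m - n) = ∏ v : Fin n, (Nat.factorial (d v - 1) : ℚ)⁻¹ := by
    have h0 : P.coeff (m - n) = P.leadingCoeff := by rw [Polynomial.leadingCoeff, hnatdeg]
    rw [h0, hP, Polynomial.leadingCoeff_prod]
    refine Finset.prod_congr rfl fun v _ => ?_
    rw [Polynomial.leadingCoeff_mul, Polynomial.leadingCoeff_C,
      (monic_ascPochhammer ℚ _).leadingCoeff, mul_one]
  have hpos : 0 < P.coeff (m - n) := by
    rw [hlead]; exact Finset.prod_pos fun v _ => by positivity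
  have hcoeff : ∀ i, 0 ≤ P.coeff i := by
    rw [hP]
    refine coeff_nonneg_prod _ _ fun v _ i => ?_
    rw [Polynomial.coeff_C_mul]
    exact mul_nonneg (by positivity) (ascPochhammer_coeff_nonneg _ i)
  refine ⟨P, hcoeff, hdeg, ?_, hpos⟩
  intro x hx
  -- the equivalence with a product of stars-and-bars sets
  let E0 : (Σ v : Fin n, {e // f e = v}) ≃ Fin m := Equiv.sigmaFiberEquiv f
  let E1 : (Fin m → ℕ) ≃ (∀ v : Fin n, {e // f e = v} → ℕ) :=
    (Equiv.arrowCongr E0.symm (Equiv.refl ℕ)).trans (Equiv.piCurry fun _ _ => ℕ)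
  have hE1 : ∀ (b : Fin m → ℕ) (v : Fin n) (ep : {e // f e = v}), E1 b v ep = b ep.1 :=
    fun _ _ _ => rfl
  have hiff : ∀ b : Fin m → ℕ,
      (∀ v : Fin (n+1), (v : ℕ) < n → net edges b v = (x:ℤ) - 1) ↔
      (∀ v : Fin n, ∑ ep : {e // f e = v}, E1 b v ep = x - 1) := by
    intro b
    constructor
    · intro hb v
      have h1 := hb v.castSucc (by simp)
      rw [hnet b v] at h1
      rw [Finset.sum_subtype (p := fun e => f e = v) (univ.filter fun e => f e = v)
        (by intro e; simp) (fun e => (b e : ℤ))] at h1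
      have h2 : ((∑ ep : {e // f e = v}, b ep.1 : ℕ) : ℤ) = ((x - 1 : ℕ) : ℤ) := by
        rw [Nat.cast_sum, Nat.cast_sub hx]
        exact h1
      have h3 : (∑ ep : {e // f e = v}, b ep.1) = x - 1 := by exact_mod_cast h2
      simpa [hE1] using h3
    · intro hb v hv
      have hv' : v = (⟨(v:ℕ), hv⟩ : Fin n).castSucc := by apply Fin.ext; simp
      rw [hv', hnet b ⟨(v:ℕ), hv⟩]
      rw [Finset.sum_subtype (p := fun e => f e = ⟨(v:ℕ), hv⟩)
        (univ.filter fun e => f e = ⟨(v:ℕ), hv⟩) (by intro e; simp) (fun e => (b e : ℤ))]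
      have h3 := hb ⟨(v:ℕ), hv⟩
      simp only [hE1] at h3
      have h2 : ((∑ ep : {e // f e = (⟨(v:ℕ), hv⟩ : Fin n)}, b ep.1 : ℕ) : ℤ)
          = ((x - 1 : ℕ) : ℤ) := by exact_mod_cast h3
      rw [Nat.cast_sum, Nat.cast_sub hx] at h2
      exact h2
  let key : Flow edges x ≃ ∀ v : Fin n, {g : {e // f e = v} → ℕ // ∑ ep, g ep = x - 1} :=
    (Equiv.subtypeEquiv E1 hiff).trans Equiv.subtypePiEquivPi
  haveI hfin : ∀ v : Fin n, Finite {g : {e // f e = v} → ℕ // ∑ ep, g ep = x - 1} := fun v =>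
    Finite.of_equiv _ (Sym.equivNatSumOfFintype {e // f e = v} (x-1))
  refine ⟨Finite.of_equiv _ key.symm, ?_⟩
  have hcard : Nat.card (Flow edges x) = ∏ v : Fin n, Nat.multichoose (d v) (x-1) := by
    rw [Nat.card_congr key, Nat.card_pi]
    refine Finset.prod_congr rfl fun v _ => ?_
    rw [← Nat.card_congr (Sym.equivNatSumOfFintype {e // f e = v} (x-1)),
      Nat.card_eq_fintype_card, Sym.card_sym_eq_multichoose, hdd]
  rw [hcard, hP, Polynomial.eval_prod, Nat.cast_prod]
  refine Finset.prod_congr rfl fun v _ => ?_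
  rw [Polynomial.eval_mul, Polynomial.eval_C]
  have hasc : (ascPochhammer ℚ (d v - 1)).eval ((x:ℕ):ℚ) = (x.ascFactorial (d v - 1) : ℚ) := by
    rw [← ascPochhammer_eval_cast, ascPochhammer_nat_eq_ascFactorial]
  rw [hasc, count_eq (d v) x (hd1 v) hx]
  push_cast
  field_simp

def W (edges : Fin m → Fin (n+1) × Fin (n+1)) : ℕ :=
  ∑ e, (((edges e).1 : ℕ) + (n - ((edges e).2 : ℕ)))

lemma W_split (edges : Fin m → Fin (n+1) × Fin (n+1)) (e0 : Fin m) :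
    W edges = (((edges e0).1 : ℕ) + (n - ((edges e0).2 : ℕ)))
      + ∑ e ∈ univ.erase e0, (((edges e).1 : ℕ) + (n - ((edges e).2 : ℕ))) :=
  (Finset.add_sum_erase univ _ (mem_univ e0)).symm

lemma main : ∀ (w : ℕ) (edges : Fin m → Fin (n+1) × Fin (n+1)),
    W edges ≤ w →
    (∀ e, (edges e).1 < (edges e).2) →
    (∀ v : Fin (n+1), (v : ℕ) < n → (∃ e, (edges e).1 = v) ∨ (∃ e, (edges e).2 = v)) →
    ∃ P : Polynomial ℚ, (∀ i, 0 ≤ P.coeff i) ∧ P.degree ≤ (m - n : ℕ) ∧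
      (∀ x : ℕ, 0 < x → Finite (Flow edges x) ∧ ((Nat.card (Flow edges x) : ℚ)
        = P.eval ((x:ℕ):ℚ))) ∧
      ((∀ v : Fin (n+1), (v : ℕ) < n → ∃ e, (edges e).1 = v) → 0 < P.coeff (m - n)) := by
  intro w
  induction w with
  | zero =>
    intro edges hw inc inv
    have hall : ∀ e, ((edges e).2 : ℕ) = n := by
      intro e
      have hterm : (((edges e).1 : ℕ) + (n - ((edges e).2 : ℕ))) ≤ W edges :=
        Finset.single_le_sum (f := fun e => (((edges e).1 : ℕ) + (n - ((edges e).2 : ℕ))))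
          (fun e _ => Nat.zero_le _) (mem_univ e)
      have hle := Fin.is_le (edges e).2
      omega
    obtain ⟨P, h1, h2, h3, h4⟩ := base edges inc hall inv
    exact ⟨P, h1, h2, h3, fun _ => h4⟩
  | succ w ih =>
    intro edges hw inc inv
    by_cases hall : ∀ e, ((edges e).2 : ℕ) = n
    · obtain ⟨P, h1, h2, h3, h4⟩ := base edges inc hall inv
      exact ⟨P, h1, h2, h3, fun _ => h4⟩
    · push_neg at hall
      obtain ⟨eIn, hIn⟩ := hall
      have hi : ((edges eIn).2 : ℕ) < n := by
        have := Fin.is_le (edges eIn).2; omega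
      by_cases hOutEx : ∃ eOut, (edges eOut).1 = (edges eIn).2
      · obtain ⟨eOut, hOut⟩ := hOutEx
        have hne : eIn ≠ eOut := by
          intro h
          subst h
          exact (ne_of_lt (inc _)) hOut
        have hIO : (edges eIn).2 = (edges eOut).1 := hOut.symm
        have hIOlt : ((edges eIn).1 : ℕ) < ((edges eOut).1 : ℕ) := by
          have h := inc eIn
          rw [hIO, Fin.lt_def] at h
          exact h
        have hOutlt : ((edges eOut).1 : ℕ) < ((edges eOut).2 : ℕ) := by
          have h := inc eOut; rw [Fin.lt_def] at h; exact h
        have hOutle := Fin.is_le (edges eOut).2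
        -- facts about the two reduced graphs
        have hG1eOut : G1 edges eIn eOut eOut = ((edges eIn).1, (edges eOut).2) := by
          simp [G1]
        have hG1off : ∀ e, e ≠ eOut → G1 edges eIn eOut e = edges e := by
          intro e he; simp [G1, Function.update_of_ne he]
        have hG2eIn : G2 edges eIn eOut eIn = ((edges eIn).1, (edges eOut).2) := by
          simp [G2]
        have hG2off : ∀ e, e ≠ eIn → G2 edges eIn eOut e = edges e := by
          intro e he; simp [G2, Function.update_of_ne he]
        have hG2src : ∀ e, (G2 edges eIn eOut e).1 = (edges e).1 := by
          intro e
          by_cases he : e = eIn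
          · subst he; rw [hG2eIn]
          · rw [hG2off e he]
        have hG1tgt : ∀ e, (G1 edges eIn eOut e).2 = (edges e).2 := by
          intro e
          by_cases he : e = eOut
          · subst he; rw [hG1eOut]
          · rw [hG1off e he]
        -- measure decrease
        have hW1 : W (G1 edges eIn eOut) ≤ w := by
          rw [W_split (G1 edges eIn eOut) eOut] at *
          rw [W_split edges eOut] at hw
          have hrest : ∑ e ∈ univ.erase eOut,
              (((G1 edges eIn eOut e).1 : ℕ) + (n - ((G1 edges eIn eOut e).2 : ℕ)))
              = ∑ e ∈ univ.erase eOut, (((edges e).1 : ℕ) + (n - ((edges e).2 : ℕ))) := by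
            refine Finset.sum_congr rfl fun e he => ?_
            rw [hG1off e (Finset.mem_erase.mp he).1]
          rw [hG1eOut] at *
          simp only at *
          omega
        have hW2 : W (G2 edges eIn eOut) ≤ w := by
          rw [W_split (G2 edges eIn eOut) eIn]
          rw [W_split edges eIn] at hw
          have hrest : ∑ e ∈ univ.erase eIn,
              (((G2 edges eIn eOut e).1 : ℕ) + (n - ((G2 edges eIn eOut e).2 : ℕ)))
              = ∑ e ∈ univ.erase eIn, (((edges e).1 : ℕ) + (n - ((edges e).2 : ℕ))) := by
            refine Finset.sum_congr rfl fun e he => ?_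
            rw [hG2off e (Finset.mem_erase.mp he).1]
          rw [hG2eIn] at *
          simp only at *
          have hIO' : ((edges eIn).2 : ℕ) = ((edges eOut).1 : ℕ) := by rw [hIO]
          omega
        -- increasing property
        have hinc1 : ∀ e, (G1 edges eIn eOut e).1 < (G1 edges eIn eOut e).2 := by
          intro e
          by_cases he : e = eOut
          · subst he
            rw [hG1eOut, Fin.lt_def]
            simp only
            omega
          · rw [hG1off e he]; exact inc e
        have hinc2 : ∀ e, (G2 edges eIn eOut e).1 < (G2 edges eIn eOut e).2 := by
          intro e
          by_cases he : e = eIn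
          · subst he
            rw [hG2eIn, Fin.lt_def]
            simp only
            omega
          · rw [hG2off e he]; exact inc e
        -- invariants
        have hinv1 : ∀ v : Fin (n+1), (v : ℕ) < n →
            (∃ e, (G1 edges eIn eOut e).1 = v) ∨ (∃ e, (G1 edges eIn eOut e).2 = v) := by
          intro v hv
          rcases inv v hv with ⟨e, he⟩ | ⟨e, he⟩
          · by_cases heo : e = eOut
            · subst heo
              right
              refine ⟨eIn, ?_⟩
              rw [hG1tgt eIn, hIO, he]
            · exact Or.inl ⟨e, by rw [hG1off e heo]; exact he⟩
          · exact Or.inr ⟨e, by rw [hG1tgt e]; exact he⟩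
        have hinv2 : ∀ v : Fin (n+1), (v : ℕ) < n →
            (∃ e, (G2 edges eIn eOut e).1 = v) ∨ (∃ e, (G2 edges eIn eOut e).2 = v) := by
          intro v hv
          rcases inv v hv with ⟨e, he⟩ | ⟨e, he⟩
          · exact Or.inl ⟨e, by rw [hG2src e]; exact he⟩
          · by_cases hei : e = eIn
            · subst hei
              left
              refine ⟨eOut, ?_⟩
              rw [hG2src eOut, ← hIO, he]
            · exact Or.inr ⟨e, by rw [hG2off e hei]; exact he⟩
        obtain ⟨P1, hc1, hd1, he1, _⟩ := ih (G1 edges eIn eOut) hW1 hinc1 hinv1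
        obtain ⟨P2, hc2, hd2, he2, hs2⟩ := ih (G2 edges eIn eOut) hW2 hinc2 hinv2
        refine ⟨P1 + P2, ?_, ?_, ?_, ?_⟩
        · intro i
          rw [Polynomial.coeff_add]
          exact add_nonneg (hc1 i) (hc2 i)
        · exact le_trans (Polynomial.degree_add_le P1 P2) (max_le hd1 hd2)
        · intro x hx
          obtain ⟨hf1, hv1⟩ := he1 x hx
          obtain ⟨hf2, hv2⟩ := he2 x hx
          have hEq := flowEquiv hne hIO x
          haveI := hf1
          haveI := hf2
          refine ⟨Finite.of_equiv _ hEq.symm, ?_⟩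
          rw [Nat.card_congr hEq, Nat.card_sum, Polynomial.eval_add]
          push_cast
          rw [hv1, hv2]
        · intro hstrong
          have hstrong2 : ∀ v : Fin (n+1), (v : ℕ) < n → ∃ e, (G2 edges eIn eOut e).1 = v := by
            intro v hv
            obtain ⟨e, he⟩ := hstrong v hv
            exact ⟨e, by rw [hG2src e]; exact he⟩
          rw [Polynomial.coeff_add]
          have := hs2 hstrong2
          have := hc1 (m - n)
          linarith
      · refine ⟨0, by simp, by simp, ?_, ?_⟩
        · intro x hx
          haveI hempty : IsEmpty (Flow edges x) :=
            dead_isEmpty edges (edges eIn).2 hi eIn rfl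
              (fun e h => hOutEx ⟨e, h⟩) x hx
          haveI : Fintype (Flow edges x) := Fintype.ofIsEmpty
          exact ⟨Finite.of_fintype _, by simp⟩
        · intro hstrong
          exact absurd (hstrong (edges eIn).2 hi) hOutEx

lemma net_eq_sums (edges : Fin m → Fin (n+1) × Fin (n+1)) (b : Fin m → ℕ) (v : Fin (n+1)) :
    net edges b v = (∑ e ∈ univ.filter (fun e => (edges e).1 = v), (b e : ℤ))
      - (∑ e ∈ univ.filter (fun e => (edges e).2 = v), (b e : ℤ))
      - ((univ.filter (fun e => (edges e).2 = v)).card : ℤ) := by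
  unfold net T
  rw [Finset.sum_sub_distrib]
  have h1 : ∑ e, (b e : ℤ) * (if (edges e).1 = v then 1 else 0)
      = ∑ e ∈ univ.filter (fun e => (edges e).1 = v), (b e : ℤ) := by
    rw [Finset.sum_filter]
    simp [mul_ite]
  have h2 : ∑ e, ((b e : ℤ) + 1) * (if (edges e).2 = v then 1 else 0)
      = (∑ e ∈ univ.filter (fun e => (edges e).2 = v), (b e : ℤ))
        + ((univ.filter (fun e => (edges e).2 = v)).card : ℤ) := by
    rw [Finset.sum_filter, Finset.card_filter]
    push_cast
    rw [← Finset.sum_add_distrib]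
    refine Finset.sum_congr rfl fun e _ => ?_
    split_ifs <;> ring
  rw [h1, h2]
  ring

end Stmt18

theorem stmt18 (n m : ℕ) (hn : 1 ≤ n)
    -- the edges of the directed multigraph `G` on vertex set `Fin (n+1)`
    (edges : Fin m → Fin (n + 1) × Fin (n + 1))
    -- each edge is directed from its smaller endpoint to its larger endpoint (no loops)
    (hdir : ∀ e, (edges e).1 < (edges e).2)
    -- the underlying graph is connected
    (hconn : (SimpleGraph.mk (fun u v => u ≠ v ∧ ∃ e, edges e = (u, v) ∨ edges e = (v, u))
        (by constructor; rintro u v ⟨h1, e, h2⟩; exact ⟨h1.symm, e, h2.symm⟩)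
        (by constructor; rintro u ⟨h1, -⟩; exact h1 rfl)).Connected)
    -- each of the vertices `1,…,n` has out-degree at least 1
    (hout : ∀ v : Fin (n + 1), (v : ℕ) < n →
      1 ≤ (Finset.univ.filter fun e => (edges e).1 = v).card)
    -- `indeg v` is the in-degree of `v`, so the shifted in-degree is `u_v = indeg v - 1 : ℤ`
    (indeg : Fin (n + 1) → ℕ)
    (hindeg : ∀ v, indeg v = (Finset.univ.filter fun e => (edges e).2 = v).card)
    -- `E x` counts the nonnegative integer flows on the edges of `G` whose net flow at
    -- each vertex `v ∈ {1,…,n}` is `x + u_v`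
    (E : ℕ → ℕ)
    (hE : ∀ x : ℕ, E x = Nat.card {b : Fin m → ℕ //
      ∀ v : Fin (n + 1), (v : ℕ) < n →
        (∑ e ∈ Finset.univ.filter (fun e => (edges e).1 = v), (b e : ℤ)) -
        (∑ e ∈ Finset.univ.filter (fun e => (edges e).2 = v), (b e : ℤ)) =
        (x : ℤ) + ((indeg v : ℤ) - 1)}) :
    ∃ P : Polynomial ℚ, P.degree = (m - n : ℕ) ∧ (∀ i, 0 ≤ P.coeff i) ∧
      ∀ x : ℕ, 0 < x → (E x : ℚ) = P.eval (x : ℚ) := by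
  classical
  have hsout : ∀ v : Fin (n+1), (v : ℕ) < n → ∃ e, (edges e).1 = v := by
    intro v hv
    obtain ⟨e, he⟩ := Finset.card_pos.mp (hout v hv)
    exact ⟨e, (Finset.mem_filter.mp he).2⟩
  have hEflow : ∀ x : ℕ, E x = Nat.card (Stmt18.Flow edges x) := by
    intro x
    rw [hE x]
    apply Nat.card_congr
    apply Equiv.subtypeEquivRight
    intro b
    constructor
    · intro hb v hv
      rw [Stmt18.net_eq_sums, hb v hv, hindeg v]
      ring
    · intro hb v hv
      have h := hb v hv
      rw [Stmt18.net_eq_sums] at h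
      rw [hindeg v]
      -- h : A - B - card = x - 1
      linarith [h]
  obtain ⟨P, hc, hdeg, heval, hstrong⟩ :=
    Stmt18.main (Stmt18.W edges) edges le_rfl hdir
      (fun v hv => Or.inl (hsout v hv))
  have hpos := hstrong hsout
  refine ⟨P, ?_, hc, ?_⟩
  · exact Polynomial.degree_eq_of_le_of_coeff_ne_zero hdeg (ne_of_gt hpos)
  · intro x hx
    rw [hEflow x]
    exact (heval x hx).2
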